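/- Let q > 0, q ≠ 1, and R_q = 2/(1-q) if 0 < q < 1, R_q = 2q/(q-1) if q > 1. Define Sin_q(x) = (𝓔_q(ix) − 𝓔_q(−ix))/(2i) and Cos_q(x) = (𝓔_q(ix) + 𝓔_q(−ix))/2 for |x| < R_q, where 𝓔_q(z) = ∑_{n=0}^∞ z^n/{n}_q!. Then for every nonzero real x with |x| < R_q and |qx| < R_q: (Sin_q(qx) − Sin_q(x))/((q−1)x) = (Cos_q(x) + Cos_q(qx))/2 and (Cos_q(qx) − Cos_q(x))/((q−1)x) = −(Sin_q(x) + Sin_q(qx))/2; i.e. D_q Sin_q = ⟨Cos_q⟩ and D_q Cos_q = −⟨Sin_q⟩. -/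

import Mathlib

/-- The symbol `{n}_q = 2(1-q^n)/((1-q)(1+q^(n-1)))` (for `n ≥ 1`). -/
noncomputable def qBrace (q : ℝ) (n : ℕ) : ℝ :=
  2 * (1 - q ^ n) / ((1 - q) * (1 + q ^ (n - 1)))

/-- The factorial `{n}_q! = {1}_q {2}_q ⋯ {n}_q`, with `{0}_q! = 1`. -/
noncomputable def qBraceFact (q : ℝ) (n : ℕ) : ℝ := ∏ k ∈ Finset.range n, qBrace q (k + 1)

/-- The radius `R_q = 2/(1-q)` for `0 < q < 1` and `R_q = 2q/(q-1)` for `q > 1`. -/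
noncomputable def Rq (q : ℝ) : ℝ := if q < 1 then 2 / (1 - q) else 2 * q / (q - 1)

/-- The improved q-exponential function `𝓔_q(z) = ∑_{n=0}^∞ z^n/{n}_q!`. -/
noncomputable def impExp (q : ℝ) (z : ℂ) : ℂ := ∑' n : ℕ, z ^ n / (qBraceFact q n : ℂ)

/-- The improved q-sine `Sin_q(x) = (𝓔_q(ix) − 𝓔_q(−ix))/(2i)`. -/
noncomputable def impSin (q : ℝ) (x : ℝ) : ℂ :=
  (impExp q (Complex.I * x) - impExp q (-(Complex.I * x))) / (2 * Complex.I)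

/-- The improved q-cosine `Cos_q(x) = (𝓔_q(ix) + 𝓔_q(−ix))/2`. -/
noncomputable def impCos (q : ℝ) (x : ℝ) : ℂ :=
  (impExp q (Complex.I * x) + impExp q (-(Complex.I * x))) / 2

lemma qBrace_succ_pos (q : ℝ) (hq : 0 < q) (hq1 : q ≠ 1) (n : ℕ) : 0 < qBrace q (n + 1) := by
  unfold qBrace
  simp only [Nat.add_sub_cancel]
  rcases lt_or_gt_of_ne hq1 with h | h
  · have h1 : q ^ (n + 1) < 1 := pow_lt_one₀ hq.le h (Nat.succ_ne_zero n)
    have h2 : (0:ℝ) < q ^ n := pow_pos hq n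
    apply div_pos <;> nlinarith
  · have h1 : 1 < q ^ (n + 1) := one_lt_pow₀ h (Nat.succ_ne_zero n)
    have h2 : (0:ℝ) < q ^ n := pow_pos hq n
    rw [div_pos_iff]
    right
    constructor <;> nlinarith

lemma qBraceFact_pos (q : ℝ) (hq : 0 < q) (hq1 : q ≠ 1) (n : ℕ) : 0 < qBraceFact q n :=
  Finset.prod_pos fun k _ => qBrace_succ_pos q hq hq1 k

lemma Rq_pos (q : ℝ) (hq : 0 < q) (hq1 : q ≠ 1) : 0 < Rq q := by
  unfold Rq
  rcases lt_or_gt_of_ne hq1 with h | h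
  · rw [if_pos h]; apply div_pos <;> nlinarith
  · rw [if_neg (not_lt.mpr h.le)]
    apply div_pos <;> nlinarith

lemma tendsto_qBrace (q : ℝ) (hq : 0 < q) (hq1 : q ≠ 1) :
    Filter.Tendsto (fun n => qBrace q (n + 1)) Filter.atTop (nhds (Rq q)) := by
  rcases lt_or_gt_of_ne hq1 with h | h
  · have hpow : Filter.Tendsto (fun n : ℕ => q ^ n) Filter.atTop (nhds 0) :=
      tendsto_pow_atTop_nhds_zero_of_lt_one hq.le h
    have hden : ((1 - q) * (1 + (0:ℝ))) ≠ 0 := by nlinarith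
    have : Filter.Tendsto (fun n : ℕ => 2 * (1 - q * q ^ n) / ((1 - q) * (1 + q ^ n)))
        Filter.atTop (nhds (2 * (1 - q * 0) / ((1 - q) * (1 + 0)))) := by
      apply Filter.Tendsto.div
      · exact (tendsto_const_nhds.sub (tendsto_const_nhds.mul hpow)).const_mul 2
      · exact (tendsto_const_nhds.add hpow).const_mul (1 - q)
      · exact hden
    convert this using 2 with n
    · unfold qBrace
      simp only [Nat.add_sub_cancel]
      ring_nf
    · unfold Rq
      rw [if_pos h]
      field_simp
      norm_num
  · have hp1 : q⁻¹ < 1 := by rw [inv_lt_one_iff₀]; right; exact h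
    have hpow : Filter.Tendsto (fun n : ℕ => q⁻¹ ^ n) Filter.atTop (nhds 0) :=
      tendsto_pow_atTop_nhds_zero_of_lt_one (by positivity) hp1
    have hden : ((1 - q) * ((0:ℝ) + 1)) ≠ 0 := by nlinarith
    have key : Filter.Tendsto (fun n : ℕ => 2 * (q⁻¹ ^ n - q) / ((1 - q) * (q⁻¹ ^ n + 1)))
        Filter.atTop (nhds (2 * (0 - q) / ((1 - q) * (0 + 1)))) := by
      apply Filter.Tendsto.div
      · exact (hpow.sub tendsto_const_nhds).const_mul 2
      · exact (hpow.add tendsto_const_nhds).const_mul (1 - q)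
      · exact hden
    convert key using 2 with n
    · unfold qBrace
      simp only [Nat.add_sub_cancel]
      have hqn : (q:ℝ) ^ n ≠ 0 := pow_ne_zero n (ne_of_gt hq)
      have hq0 : (q:ℝ) ≠ 0 := ne_of_gt hq
      rw [inv_pow]
      field_simp
      ring
    · unfold Rq
      rw [if_neg (not_lt.mpr h.le)]
      rw [div_eq_div_iff (by nlinarith : (q:ℝ) - 1 ≠ 0) hden]
      ring

lemma summable_impExp (q : ℝ) (hq : 0 < q) (hq1 : q ≠ 1) (z : ℂ) (hz : ‖z‖ < Rq q) :
    Summable (fun n : ℕ => z ^ n / (qBraceFact q n : ℂ)) := by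
  set r' : ℝ := (‖z‖ + Rq q) / 2 with hr'
  have hz0 : 0 ≤ ‖z‖ := norm_nonneg z
  have hr'z : ‖z‖ < r' := by rw [hr']; linarith
  have hr'R : r' < Rq q := by rw [hr']; linarith
  have hr'pos : 0 < r' := lt_of_le_of_lt hz0 hr'z
  have hev : ∀ᶠ n : ℕ in Filter.atTop, r' < qBrace q (n + 1) :=
    (tendsto_qBrace q hq hq1).eventually (eventually_gt_nhds hr'R)
  apply summable_of_ratio_norm_eventually_le (r := ‖z‖ / r')
  · rw [div_lt_one hr'pos]; exact hr'z
  · filter_upwards [hev] with n hn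
    have hf : (0:ℝ) < qBraceFact q n := qBraceFact_pos q hq hq1 n
    have hb : (0:ℝ) < qBrace q (n + 1) := qBrace_succ_pos q hq hq1 n
    have hfs : qBraceFact q (n + 1) = qBraceFact q n * qBrace q (n + 1) := by
      unfold qBraceFact
      rw [Finset.prod_range_succ]
    rw [hfs]
    have h1 : ‖z ^ (n + 1) / ((qBraceFact q n * qBrace q (n + 1) : ℝ) : ℂ)‖
        = ‖z‖ / qBrace q (n + 1) * (‖z‖ ^ n / qBraceFact q n) := by
      rw [norm_div, norm_pow, Complex.norm_real]
      rw [Real.norm_eq_abs, abs_of_pos (by positivity)]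
      field_simp
      ring
    have h2 : ‖z ^ n / ((qBraceFact q n : ℝ) : ℂ)‖ = ‖z‖ ^ n / qBraceFact q n := by
      rw [norm_div, norm_pow, Complex.norm_real, Real.norm_eq_abs, abs_of_pos hf]
    rw [h1, h2]
    apply mul_le_mul_of_nonneg_right _ (by positivity)
    apply div_le_div_of_nonneg_left hz0 hr'pos hn.le |>.trans_eq rfl

lemma key_impExp (q : ℝ) (hq : 0 < q) (hq1 : q ≠ 1) (z : ℂ) (hz : ‖z‖ < Rq q)
    (hqz : ‖(q : ℂ) * z‖ < Rq q) :
    impExp q ((q : ℂ) * z) - impExp q z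
      = (((q : ℂ) - 1) * z / 2) * (impExp q z + impExp q ((q : ℂ) * z)) := by
  set a : ℕ → ℂ := fun n => ((q : ℂ) * z) ^ n / (qBraceFact q n : ℂ) with ha
  set b : ℕ → ℂ := fun n => z ^ n / (qBraceFact q n : ℂ) with hb
  have hsa : Summable a := summable_impExp q hq hq1 _ hqz
  have hsb : Summable b := summable_impExp q hq hq1 _ hz
  have hterm : ∀ n : ℕ, a (n + 1) - b (n + 1) = (((q : ℂ) - 1) * z / 2) * (a n + b n) := by
    intro n
    have hf : (qBraceFact q n : ℝ) ≠ 0 := ne_of_gt (qBraceFact_pos q hq hq1 n)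
    have hfs : qBraceFact q (n + 1) = qBraceFact q n * qBrace q (n + 1) := by
      unfold qBraceFact; rw [Finset.prod_range_succ]
    have hq1n : q ^ (n + 1) ≠ 1 := by
      rcases lt_or_gt_of_ne hq1 with h | h
      · exact ne_of_lt (pow_lt_one₀ hq.le h (Nat.succ_ne_zero n))
      · exact ne_of_gt (one_lt_pow₀ h (Nat.succ_ne_zero n))
    have hbr : (qBrace q (n + 1) : ℂ) = 2 * (1 - (q : ℂ) ^ (n + 1)) / ((1 - q) * (1 + (q : ℂ) ^ n)) := by
      unfold qBrace
      simp only [Nat.add_sub_cancel]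
      push_cast
      ring
    have hbrne : qBrace q (n + 1) ≠ 0 := ne_of_gt (qBrace_succ_pos q hq hq1 n)
    have hqC1 : (1:ℂ) - (q : ℂ) ≠ 0 := by
      have : (q : ℂ) ≠ 1 := by exact_mod_cast hq1
      exact sub_ne_zero.mpr this.symm
    have h1qn : (1:ℂ) - (q:ℂ)^(n+1) ≠ 0 := by
      have : (q : ℂ) ^ (n+1) ≠ 1 := by exact_mod_cast hq1n
      exact sub_ne_zero.mpr this.symm
    have h1qnpos : (1:ℂ) + (q:ℂ)^n ≠ 0 := by
      intro hcon
      have : (1:ℝ) + q ^ n = 0 := by exact_mod_cast hcon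
      nlinarith [pow_pos hq n]
    have hfC : (qBraceFact q n : ℂ) ≠ 0 := by exact_mod_cast hf
    have hbrC : (qBrace q (n+1) : ℂ) ≠ 0 := by exact_mod_cast hbrne
    simp only [ha, hb, hfs]
    push_cast
    rw [hbr]
    field_simp [hfC, hqC1, h1qn, h1qnpos]
    ring
  have hab : Summable (fun n => a n - b n) := hsa.sub hsb
  have h0 : a 0 - b 0 = 0 := by simp [ha, hb, qBraceFact]
  have hshift : ∑' n, (a n - b n) = ∑' n, (a (n + 1) - b (n + 1)) := by
    rw [Summable.tsum_eq_zero_add hab, h0, zero_add]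
  have hEa : impExp q ((q : ℂ) * z) = ∑' n, a n := rfl
  have hEb : impExp q z = ∑' n, b n := rfl
  rw [hEa, hEb, ← Summable.tsum_sub hsa hsb, hshift]
  calc ∑' n, (a (n + 1) - b (n + 1))
      = ∑' n, (((q : ℂ) - 1) * z / 2) * (b n + a n) := by
        apply tsum_congr; intro n; rw [hterm n]; ring
    _ = (((q : ℂ) - 1) * z / 2) * ∑' n, (b n + a n) := by rw [tsum_mul_left]
    _ = (((q : ℂ) - 1) * z / 2) * (∑' n, b n + ∑' n, a n) := by rw [Summable.tsum_add hsb hsa]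

/-- `D_q Sin_q = ⟨Cos_q⟩` and `D_q Cos_q = −⟨Sin_q⟩` for nonzero real `x` with
`|x| < R_q` and `|qx| < R_q`. -/
theorem jackson_deriv_impSin_impCos (q : ℝ) (hq : 0 < q) (hq1 : q ≠ 1) (x : ℝ)
    (hx0 : x ≠ 0) (hx : |x| < Rq q) (hqx : |q * x| < Rq q) :
    (impSin q (q * x) - impSin q x) / ((↑q - 1) * (x : ℂ)) =
        (impCos q x + impCos q (q * x)) / 2 ∧
    (impCos q (q * x) - impCos q x) / ((↑q - 1) * (x : ℂ)) =
        -((impSin q x + impSin q (q * x)) / 2) := by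
  have hn1 : ‖Complex.I * (x:ℂ)‖ = |x| := by
    rw [norm_mul, Complex.norm_I, one_mul, Complex.norm_real, Real.norm_eq_abs]
  have hn2 : ‖-(Complex.I * (x:ℂ))‖ = |x| := by rw [norm_neg, hn1]
  have hnq1 : ‖(q:ℂ) * (Complex.I * (x:ℂ))‖ = |q * x| := by
    rw [norm_mul, hn1, Complex.norm_real, Real.norm_eq_abs, ← abs_mul]
  have hnq2 : ‖(q:ℂ) * -(Complex.I * (x:ℂ))‖ = |q * x| := by
    rw [norm_mul, hn2, Complex.norm_real, Real.norm_eq_abs, ← abs_mul]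
  have h1 := key_impExp q hq hq1 (Complex.I * (x:ℂ)) (hn1 ▸ hx) (hnq1 ▸ hqx)
  have h2 := key_impExp q hq hq1 (-(Complex.I * (x:ℂ))) (hn2 ▸ hx) (hnq2 ▸ hqx)
  have e1 : Complex.I * ((q * x : ℝ) : ℂ) = (q:ℂ) * (Complex.I * (x:ℂ)) := by push_cast; ring
  have e2 : -((q:ℂ) * (Complex.I * (x:ℂ))) = (q:ℂ) * -(Complex.I * (x:ℂ)) := by ring
  have hqx1 : ((q:ℂ) - 1) * (x:ℂ) ≠ 0 := by
    apply mul_ne_zero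
    · have : (q:ℂ) ≠ 1 := by exact_mod_cast hq1
      exact sub_ne_zero.mpr this
    · exact_mod_cast hx0
  have hI2 : Complex.I ^ 2 = -1 := Complex.I_sq
  have hdivI : ∀ w : ℂ, w / (2 * Complex.I) = -Complex.I * w / 2 := by
    intro w
    rw [div_eq_div_iff (by simp [Complex.I_ne_zero]) (two_ne_zero)]
    linear_combination (2 * w) * hI2
  unfold impSin impCos
  rw [e1, e2]
  constructor
  · rw [hdivI, hdivI, div_eq_iff hqx1]
    linear_combination (-Complex.I / 2) * h1 + (Complex.I / 2) * h2 +
      (-(((q:ℂ) - 1) * x / 4) * (impExp q (Complex.I * (x:ℂ))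
        + impExp q (-(Complex.I * (x:ℂ)))
        + impExp q ((q:ℂ) * (Complex.I * (x:ℂ)))
        + impExp q ((q:ℂ) * -(Complex.I * (x:ℂ))))) * hI2
  · rw [hdivI, hdivI, div_eq_iff hqx1]
    linear_combination (1/2 : ℂ) * h1 + (1/2 : ℂ) * h2
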